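/- Let β and γ be linear maps on real sequences. The operator R(ω,x) = (βx, γx) is bounded on Z₂ if and only if γ restricts to a bounded operator on ℓ² and β − KP∘γ is bounded from ℓ² to ℓ² (for every x ∈ ℓ², γx ∈ ℓ², βx − KP(γx) ∈ ℓ², and ‖βx − KP(γx)‖₂ ≤ C‖x‖₂ for some constant C). In particular, (ω,x) ↦ (βx, 0) is bounded on Z₂ if and only if β restricts to a bounded operator on ℓ², and (ω,x) ↦ (0, γx) is bounded on Z₂ if and only if γ is bounded from ℓ² to ℓ_f (for every x ∈ ℓ², γx ∈ ℓ², KP(γx) ∈ ℓ², and ‖KP(γx)‖₂ + ‖γx‖₂ ≤ C‖x‖₂). -/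
import Mathlib


open scoped BigOperators

noncomputable section

/-- Real sequences. -/
abbrev RSeq : Type := ℕ → ℝ

/-- Membership in ℓ². -/
def memL2 (x : RSeq) : Prop := Summable (fun n => (x n) ^ 2)

/-- The ℓ² norm. -/
noncomputable def l2norm (x : RSeq) : ℝ := Real.sqrt (∑' n, (x n) ^ 2)

/-- The Kalton–Peck map, defined coordinatewise.  (In Lean, `Real.log 0 = 0` and
division by zero is zero, so the conventions `0·log 0 = 0` and `KP 0 = 0` hold.) -/
noncomputable def KP (x : RSeq) : RSeq := fun n => 2 * x n * Real.log (|x n| / l2norm x)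

/-- Membership in the Kalton–Peck space Z₂. -/
def memZ2 (u : RSeq × RSeq) : Prop := memL2 u.2 ∧ memL2 (u.1 - KP u.2)

/-- The Z₂ quasinorm. -/
noncomputable def Z2norm (u : RSeq × RSeq) : ℝ := l2norm (u.1 - KP u.2) + l2norm u.2

/-- A map on pairs of sequences is bounded on Z₂. -/
def BoundedOnZ2 (T : RSeq × RSeq → RSeq × RSeq) : Prop :=
  (∀ u, memZ2 u → memZ2 (T u)) ∧ ∃ C : ℝ, ∀ u, memZ2 u → Z2norm (T u) ≤ C * Z2norm u

/-- The matrix operator associated to four linear maps on sequences. -/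
def matOp (α β δ γ : RSeq →ₗ[ℝ] RSeq) : RSeq × RSeq → RSeq × RSeq :=
  fun u => (α u.1 + β u.2, δ u.1 + γ u.2)

/-- Membership in the Orlicz space ℓ_f = Dom KP. -/
def memLf (x : RSeq) : Prop := memL2 x ∧ memL2 (KP x)

/-- The ℓ_f quasinorm. -/
noncomputable def lfNorm (x : RSeq) : ℝ := l2norm (KP x) + l2norm x

/-- Membership in ℓ_f* = Ran KP. -/
def memLfStar (ω : RSeq) : Prop := ∃ x : RSeq, memL2 x ∧ memL2 (ω - KP x)

/-- The ℓ_f* quasinorm. -/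
noncomputable def lfStarNorm (ω : RSeq) : ℝ :=
  sInf {r : ℝ | ∃ x : RSeq, memL2 x ∧ memL2 (ω - KP x) ∧ r = l2norm (ω - KP x) + l2norm x}

/-- A bounded map on Z₂ is strictly singular if every linear subspace of Z₂ on which it is
bounded below is finite dimensional. -/
def StrictlySingular (T : RSeq × RSeq → RSeq × RSeq) : Prop :=
  ∀ V : Submodule ℝ (RSeq × RSeq), (∀ v ∈ V, memZ2 v) →
    (∃ c > 0, ∀ v ∈ V, c * Z2norm v ≤ Z2norm (T v)) → FiniteDimensional ℝ V

/-- A set of sequences is totally bounded (relatively compact) for the ℓ² norm. -/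
def l2TotallyBounded (A : Set RSeq) : Prop :=
  ∀ ε > 0, ∃ S : Set RSeq, S.Finite ∧
    ∀ a ∈ A, ∃ s ∈ S, memL2 (a - s) ∧ l2norm (a - s) < ε

/-- A map on Z₂ is compact if the image of the unit ball is totally bounded for the
Z₂ quasinorm. -/
def CompactOnZ2 (T : RSeq × RSeq → RSeq × RSeq) : Prop :=
  ∀ ε > 0, ∃ S : Set (RSeq × RSeq), S.Finite ∧
    ∀ u, memZ2 u → Z2norm u ≤ 1 → ∃ s ∈ S, memZ2 (T u - s) ∧ Z2norm (T u - s) < ε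

lemma l2norm_nonneg (x : RSeq) : 0 ≤ l2norm x := Real.sqrt_nonneg _

lemma memL2_zero : memL2 (0 : RSeq) := by
  simpa [memL2] using summable_zero

lemma l2norm_zero : l2norm (0 : RSeq) = 0 := by
  simp [l2norm]

lemma KP_zero : KP (0 : RSeq) = 0 := by
  funext n; simp [KP]

lemma memL2_neg_iff (x : RSeq) : memL2 (-x) ↔ memL2 x := by
  simp [memL2, neg_sq]

lemma l2norm_neg (x : RSeq) : l2norm (-x) = l2norm x := by
  simp [l2norm, neg_sq]

lemma memZ2_KP {x : RSeq} (hx : memL2 x) : memZ2 (KP x, x) := by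
  refine ⟨hx, ?_⟩
  simpa [sub_self] using memL2_zero

lemma Z2norm_KP (x : RSeq) : Z2norm (KP x, x) = l2norm x := by
  simp [Z2norm, sub_self, l2norm_zero]

/-- R(ω,x) = (βx, γx) is bounded on Z₂ iff γ restricts to a bounded operator
on ℓ² and β − KP∘γ is bounded from ℓ² to ℓ².  In particular (ω,x) ↦ (βx, 0) is bounded iff
β restricts to a bounded operator on ℓ², and (ω,x) ↦ (0, γx) is bounded iff γ is bounded
from ℓ² to ℓ_f. -/
theorem stmt_13 (β γ : RSeq →ₗ[ℝ] RSeq) :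
    (BoundedOnZ2 (fun u : RSeq × RSeq => (β u.2, γ u.2)) ↔
      (∃ C : ℝ, ∀ x : RSeq, memL2 x → memL2 (γ x) ∧ l2norm (γ x) ≤ C * l2norm x) ∧
      (∃ C : ℝ, ∀ x : RSeq, memL2 x →
        memL2 (β x - KP (γ x)) ∧ l2norm (β x - KP (γ x)) ≤ C * l2norm x)) ∧
    (BoundedOnZ2 (fun u : RSeq × RSeq => (β u.2, (0 : RSeq))) ↔
      ∃ C : ℝ, ∀ x : RSeq, memL2 x → memL2 (β x) ∧ l2norm (β x) ≤ C * l2norm x) ∧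
    (BoundedOnZ2 (fun u : RSeq × RSeq => ((0 : RSeq), γ u.2)) ↔
      ∃ C : ℝ, ∀ x : RSeq, memL2 x →
        memL2 (γ x) ∧ memL2 (KP (γ x)) ∧
        l2norm (KP (γ x)) + l2norm (γ x) ≤ C * l2norm x) := by
  have hKP0 : KP (0 : RSeq) = 0 := KP_zero
  refine ⟨?_, ?_, ?_⟩
  · constructor
    · rintro ⟨hmem, C, hC⟩
      constructor
      · refine ⟨C, fun x hx => ?_⟩
        have h1 := hmem (KP x, x) (memZ2_KP hx)
        have h2 := hC (KP x, x) (memZ2_KP hx)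
        simp only [Z2norm_KP] at h2
        refine ⟨h1.1, ?_⟩
        have : Z2norm (β x, γ x) = l2norm (β x - KP (γ x)) + l2norm (γ x) := rfl
        have hnn := l2norm_nonneg (β x - KP (γ x))
        simp only [this] at h2
        linarith
      · refine ⟨C, fun x hx => ?_⟩
        have h1 := hmem (KP x, x) (memZ2_KP hx)
        have h2 := hC (KP x, x) (memZ2_KP hx)
        simp only [Z2norm_KP] at h2
        refine ⟨h1.2, ?_⟩
        have : Z2norm (β x, γ x) = l2norm (β x - KP (γ x)) + l2norm (γ x) := rfl
        have hnn := l2norm_nonneg (γ x)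
        simp only [this] at h2
        linarith
    · rintro ⟨⟨C1, h1⟩, ⟨C2, h2⟩⟩
      constructor
      · rintro u ⟨hu2, _⟩
        exact ⟨(h1 u.2 hu2).1, (h2 u.2 hu2).1⟩
      · refine ⟨|C1| + |C2|, ?_⟩
        rintro u ⟨hu2, hu1⟩
        have ha := (h1 u.2 hu2).2
        have hb := (h2 u.2 hu2).2
        have hx : l2norm u.2 ≤ Z2norm u := by
          have := l2norm_nonneg (u.1 - KP u.2)
          unfold Z2norm; linarith
        have hxn := l2norm_nonneg u.2
        have hZ : Z2norm (β u.2, γ u.2) =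
            l2norm (β u.2 - KP (γ u.2)) + l2norm (γ u.2) := rfl
        have hc1 : C1 * l2norm u.2 ≤ |C1| * l2norm u.2 :=
          mul_le_mul_of_nonneg_right (le_abs_self C1) hxn
        have hc2 : C2 * l2norm u.2 ≤ |C2| * l2norm u.2 :=
          mul_le_mul_of_nonneg_right (le_abs_self C2) hxn
        have habs : (|C1| + |C2|) * l2norm u.2 ≤ (|C1| + |C2|) * Z2norm u :=
          mul_le_mul_of_nonneg_left hx (by positivity)
        rw [hZ]
        nlinarith
  · constructor
    · rintro ⟨hmem, C, hC⟩
      refine ⟨C, fun x hx => ?_⟩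
      have h1 := (hmem (KP x, x) (memZ2_KP hx)).2
      have h2 := hC (KP x, x) (memZ2_KP hx)
      simp only [Z2norm_KP] at h2
      have he : (β x - KP (0 : RSeq)) = β x := by rw [hKP0, sub_zero]
      have hZ : Z2norm (β x, (0 : RSeq)) = l2norm (β x) := by
        simp only [Z2norm, hKP0]
        simp [l2norm_zero, sub_zero]
      rw [hZ] at h2
      simp only [he] at h1
      exact ⟨h1, h2⟩
    · rintro ⟨C, hC⟩
      constructor
      · rintro u ⟨hu2, _⟩
        refine ⟨memL2_zero, ?_⟩
        have he : (β u.2 - KP (0 : RSeq)) = β u.2 := by rw [hKP0, sub_zero]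
        simpa [he] using (hC u.2 hu2).1
      · refine ⟨|C|, ?_⟩
        rintro u ⟨hu2, hu1⟩
        have hb := (hC u.2 hu2).2
        have hx : l2norm u.2 ≤ Z2norm u := by
          have := l2norm_nonneg (u.1 - KP u.2)
          unfold Z2norm; linarith
        have hxn := l2norm_nonneg u.2
        have hZ : Z2norm (β u.2, (0 : RSeq)) = l2norm (β u.2) := by
          simp only [Z2norm, hKP0]
          simp [l2norm_zero, sub_zero]
        rw [hZ]
        have hc : C * l2norm u.2 ≤ |C| * l2norm u.2 :=
          mul_le_mul_of_nonneg_right (le_abs_self C) hxn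
        have habs : |C| * l2norm u.2 ≤ |C| * Z2norm u :=
          mul_le_mul_of_nonneg_left hx (abs_nonneg C)
        linarith
  · have hZ0 : ∀ y : RSeq, Z2norm ((0 : RSeq), y) = l2norm (KP y) + l2norm y := by
      intro y
      have : ((0 : RSeq) - KP y) = -(KP y) := zero_sub _
      simp [Z2norm, this, l2norm_neg]
    have hm0 : ∀ y : RSeq, memL2 ((0 : RSeq) - KP y) ↔ memL2 (KP y) := by
      intro y
      rw [zero_sub]
      exact memL2_neg_iff _
    constructor
    · rintro ⟨hmem, C, hC⟩
      refine ⟨C, fun x hx => ?_⟩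
      have h1 := hmem (KP x, x) (memZ2_KP hx)
      have h2 := hC (KP x, x) (memZ2_KP hx)
      simp only [Z2norm_KP] at h2
      rw [hZ0 (γ x)] at h2
      exact ⟨h1.1, (hm0 (γ x)).mp h1.2, h2⟩
    · rintro ⟨C, hC⟩
      constructor
      · rintro u ⟨hu2, _⟩
        exact ⟨(hC u.2 hu2).1, (hm0 (γ u.2)).mpr (hC u.2 hu2).2.1⟩
      · refine ⟨|C|, ?_⟩
        rintro u ⟨hu2, hu1⟩
        have hb := (hC u.2 hu2).2.2
        have hx : l2norm u.2 ≤ Z2norm u := by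
          have := l2norm_nonneg (u.1 - KP u.2)
          unfold Z2norm; linarith
        have hxn := l2norm_nonneg u.2
        rw [hZ0 (γ u.2)]
        have hc : C * l2norm u.2 ≤ |C| * l2norm u.2 :=
          mul_le_mul_of_nonneg_right (le_abs_self C) hxn
        have habs : |C| * l2norm u.2 ≤ |C| * Z2norm u :=
          mul_le_mul_of_nonneg_left hx (abs_nonneg C)
        linarith
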